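/- (Exponentiated Gradient regret bound) Let η > 0 and let z_1,…,z_T ∈ ℝ^k satisfy η z_{t,i} ≥ -1 for all t ∈ [T], i ∈ [k]. Define q_1 = (1/k,…,1/k) and recursively q̃_{t+1,i} = q_{t,i} exp(-η z_{t,i}), q_{t+1} = q̃_{t+1} / ∑_{i=1}^k q̃_{t+1,i}. Then for every u ∈ Δ^k: ∑_{t=1}^T ⟨q_t - u, z_t⟩ ≤ log(k)/η + η ∑_{t=1}^T ∑_{i=1}^k q_{t,i} z_{t,i}². -/

import Mathlib

open Real Finset

lemma exp_le_quad {y : ℝ} (hy : y ≤ 1) : Real.exp y ≤ 1 + y + y ^ 2 := by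
  rcases le_or_gt y (-1) with h | h
  · have h1 : Real.exp y ≤ Real.exp (-1) := Real.exp_le_exp.mpr h
    have h2 : Real.exp (-1) ≤ 1 := Real.exp_le_one_iff.mpr (by norm_num)
    nlinarith [sq_nonneg (y + 1)]
  · have hb : |y| ≤ 1 := abs_le.mpr ⟨le_of_lt h, hy⟩
    have hB := Real.exp_bound hb (n := 2) (by norm_num)
    have hsum : ∑ i ∈ Finset.range 2, y ^ i / i.factorial = 1 + y := by
      simp [Finset.sum_range_succ]
    rw [hsum] at hB
    have h2 := (abs_le.mp hB).2
    rw [sq_abs] at h2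
    simp [Nat.factorial] at h2
    nlinarith [sq_nonneg y]

theorem stmt_3 (k T : ℕ) (hk : 0 < k) (η : ℝ) (hη : 0 < η)
    (z : ℕ → Fin k → ℝ) (hz : ∀ t < T, ∀ i, η * z t i ≥ -1)
    (q : ℕ → Fin k → ℝ)
    (h0 : ∀ i, q 0 i = 1 / k)
    (hrec : ∀ t i, q (t + 1) i =
      q t i * Real.exp (-η * z t i) / ∑ j, q t j * Real.exp (-η * z t j))
    (u : Fin k → ℝ) (hu0 : ∀ i, 0 ≤ u i) (hu1 : ∑ i, u i = 1) :
    ∑ t ∈ Finset.range T, ∑ i, (q t i - u i) * z t i ≤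
      Real.log k / η + η * ∑ t ∈ Finset.range T, ∑ i, q t i * (z t i) ^ 2 := by
  haveI : Nonempty (Fin k) := Fin.pos_iff_nonempty.mp hk
  have hqpos : ∀ t i, 0 < q t i := by
    intro t
    induction t with
    | zero =>
      intro i; rw [h0 i]
      have : (0:ℝ) < k := by exact_mod_cast hk
      positivity
    | succ t ih =>
      intro i
      have hZ : 0 < ∑ j, q t j * Real.exp (-η * z t j) :=
        Finset.sum_pos (fun j _ => mul_pos (ih j) (Real.exp_pos _)) Finset.univ_nonempty
      rw [hrec]
      exact div_pos (mul_pos (ih i) (Real.exp_pos _)) hZ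
  have hZpos : ∀ t, 0 < ∑ j, q t j * Real.exp (-η * z t j) :=
    fun t => Finset.sum_pos (fun j _ => mul_pos (hqpos t j) (Real.exp_pos _)) Finset.univ_nonempty
  have hqsum : ∀ t, ∑ i, q t i = 1 := by
    intro t; induction t with
    | zero =>
      simp only [h0]
      rw [Finset.sum_const, Finset.card_univ, Fintype.card_fin]
      rw [nsmul_eq_mul]; field_simp [(Nat.cast_pos.mpr hk : (0:ℝ) < k).ne']
    | succ t ih =>
      simp only [hrec]
      rw [← Finset.sum_div, div_self (hZpos t).ne']
  set Φ : ℕ → ℝ := fun t => ∑ i, u i * (Real.log (u i) - Real.log (q t i)) with hPhi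
  have key : ∀ t < T, η * (∑ i, (q t i - u i) * z t i) ≤
      Φ t - Φ (t + 1) + η ^ 2 * ∑ i, q t i * z t i ^ 2 := by
    intro t ht
    have hZ := hZpos t
    set Zt := ∑ j, q t j * Real.exp (-η * z t j) with hZt
    have hlog : ∀ i, Real.log (q (t + 1) i) =
        Real.log (q t i) + (-η * z t i) - Real.log Zt := by
      intro i
      rw [hrec, Real.log_div (mul_pos (hqpos t i) (Real.exp_pos _)).ne' hZ.ne',
        Real.log_mul (hqpos t i).ne' (Real.exp_ne_zero _), Real.log_exp]
    have hPhidiff : Φ (t + 1) - Φ t = η * (∑ i, u i * z t i) + Real.log Zt := by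
      simp only [hPhi]
      rw [← Finset.sum_sub_distrib]
      have hc : ∀ i ∈ Finset.univ,
          u i * (Real.log (u i) - Real.log (q (t+1) i)) -
            u i * (Real.log (u i) - Real.log (q t i))
          = η * (u i * z t i) + u i * Real.log Zt := by
        intro i _; rw [hlog i]; ring
      rw [Finset.sum_congr rfl hc, Finset.sum_add_distrib, ← Finset.mul_sum,
        ← Finset.sum_mul, hu1, one_mul]
    have hZle : Zt ≤ 1 - η * (∑ i, q t i * z t i) + η ^ 2 * ∑ i, q t i * z t i ^ 2 := by
      have hterm : ∀ i ∈ Finset.univ,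
          q t i * Real.exp (-η * z t i) ≤
            q t i * (1 + (-η * z t i) + (-η * z t i) ^ 2) := by
        intro i _
        refine mul_le_mul_of_nonneg_left (exp_le_quad ?_) (hqpos t i).le
        have := hz t ht i; linarith
      calc Zt ≤ ∑ i, q t i * (1 + (-η * z t i) + (-η * z t i) ^ 2) :=
            Finset.sum_le_sum hterm
        _ = ∑ i, (q t i + (-η) * (q t i * z t i) + η ^ 2 * (q t i * z t i ^ 2)) := by
            apply Finset.sum_congr rfl; intro i _; ring
        _ = 1 - η * (∑ i, q t i * z t i) + η ^ 2 * ∑ i, q t i * z t i ^ 2 := by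
            rw [Finset.sum_add_distrib, Finset.sum_add_distrib, ← Finset.mul_sum,
              ← Finset.mul_sum, hqsum t]; ring
    have hlogZ : Real.log Zt ≤ - (η * (∑ i, q t i * z t i)) +
        η ^ 2 * ∑ i, q t i * z t i ^ 2 := by
      have h1 : Real.log Zt ≤ Zt - 1 := Real.log_le_sub_one_of_pos hZ
      linarith
    have hsplit : ∑ i, (q t i - u i) * z t i =
        (∑ i, q t i * z t i) - ∑ i, u i * z t i := by
      rw [← Finset.sum_sub_distrib]
      apply Finset.sum_congr rfl; intro i _; ring
    rw [hsplit, mul_sub]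
    linarith
  have hsum : η * (∑ t ∈ Finset.range T, ∑ i, (q t i - u i) * z t i) ≤
      Φ 0 - Φ T + η ^ 2 * ∑ t ∈ Finset.range T, ∑ i, q t i * z t i ^ 2 := by
    rw [Finset.mul_sum, Finset.mul_sum]
    have htel : ∑ t ∈ Finset.range T, (Φ t - Φ (t + 1)) = Φ 0 - Φ T :=
      Finset.sum_range_sub' Φ T
    calc ∑ t ∈ Finset.range T, η * ∑ i, (q t i - u i) * z t i
        ≤ ∑ t ∈ Finset.range T, (Φ t - Φ (t + 1) + η ^ 2 * ∑ i, q t i * z t i ^ 2) :=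
          Finset.sum_le_sum (fun t ht => key t (Finset.mem_range.mp ht))
      _ = (Φ 0 - Φ T) + ∑ t ∈ Finset.range T, η ^ 2 * ∑ i, q t i * z t i ^ 2 := by
          rw [Finset.sum_add_distrib, htel]
  have hPhi0 : Φ 0 ≤ Real.log k := by
    have hlogk : Real.log ((1:ℝ) / k) = - Real.log k := by
      rw [one_div, Real.log_inv]
    have hΦ0 : Φ 0 = (∑ i, u i * Real.log (u i)) + Real.log k := by
      simp only [hPhi]
      calc ∑ i, u i * (Real.log (u i) - Real.log (q 0 i))
          = ∑ i, (u i * Real.log (u i) + u i * Real.log k) := by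
            apply Finset.sum_congr rfl; intro i _; rw [h0 i, hlogk]; ring
        _ = (∑ i, u i * Real.log (u i)) + (∑ i, u i) * Real.log k := by
            rw [Finset.sum_add_distrib, Finset.sum_mul]
        _ = (∑ i, u i * Real.log (u i)) + Real.log k := by rw [hu1, one_mul]
    have hneg : ∑ i, u i * Real.log (u i) ≤ 0 := by
      apply Finset.sum_nonpos
      intro i _
      have hle1 : u i ≤ 1 := by
        rw [← hu1]
        exact Finset.single_le_sum (fun j _ => hu0 j) (Finset.mem_univ i)
      exact mul_nonpos_of_nonneg_of_nonpos (hu0 i) (Real.log_nonpos (hu0 i) hle1)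
    linarith
  have hPhiT : 0 ≤ Φ T := by
    have h : ∑ i, u i * (Real.log (q T i) - Real.log (u i)) ≤ ∑ i, (q T i - u i) := by
      apply Finset.sum_le_sum
      intro i _
      rcases eq_or_lt_of_le (hu0 i) with h0i | h0i
      · rw [← h0i]; simpa using (hqpos T i).le
      · have hlog : Real.log (q T i) - Real.log (u i) ≤ q T i / u i - 1 := by
          rw [← Real.log_div (hqpos T i).ne' h0i.ne']
          exact Real.log_le_sub_one_of_pos (div_pos (hqpos T i) h0i)
        calc u i * (Real.log (q T i) - Real.log (u i)) ≤ u i * (q T i / u i - 1) :=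
              mul_le_mul_of_nonneg_left hlog (hu0 i)
          _ = q T i - u i := by field_simp
    have hsum0 : ∑ i, (q T i - u i) = 0 := by
      rw [Finset.sum_sub_distrib, hqsum T, hu1]; ring
    have hΦ : Φ T = - ∑ i, u i * (Real.log (q T i) - Real.log (u i)) := by
      simp only [hPhi]
      rw [← Finset.sum_neg_distrib]
      apply Finset.sum_congr rfl; intro i _; ring
    linarith
  set R := ∑ t ∈ Finset.range T, ∑ i, (q t i - u i) * z t i with hR
  set S := ∑ t ∈ Finset.range T, ∑ i, q t i * z t i ^ 2 with hS
  have hηR : η * R ≤ Real.log k + η ^ 2 * S := by linarith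
  calc R = (η * R) / η := by field_simp
    _ ≤ (Real.log k + η ^ 2 * S) / η := by gcongr
    _ = Real.log k / η + η * S := by field_simp
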